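/- arXiv:2110.02090 — 2 statements merged into one kernel-verified Lean document; each statement's English description precedes it below -/
import Mathlib

section
/- Let $A \subset \mathbb{R}$ be a measurable set with $0 < |A| < \infty$, let $N \ge 1$, and let $g_1,\dots,g_N \in L^2(A)$ satisfy: for every subset $U \subseteq \{1,\dots,N\}$ and every $x \in A$, $|\sum_{i \in U} g_i(x)| \le M\sqrt{|U|}$. Then there exists an index $i_0$ such that $\int_A |g_{i_0}|^2 \le \frac{6 M^2 |A|}{\sqrt{N}}$. -/
open MeasureTheory Real

/-- Auxiliary claim: if every sub-collection of the `gᵢ` has pointwise bounded sums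
`|∑_{i ∈ U} gᵢ(x)| ≤ M √|U|` on `A`, then some `g_{i₀}` has small `L²(A)` norm. -/
theorem exists_small_L2_of_subset_sum_bound (A : Set ℝ) (hA : MeasurableSet A)
    (h0 : 0 < volume A) (hfin : volume A < ⊤)
    (N : ℕ) (hN : 1 ≤ N) (M : ℝ) (hM : 0 < M) (g : Fin N → ℝ → ℂ)
    (hg : ∀ i, MemLp (g i) 2 (volume.restrict A))
    (hbd : ∀ U : Finset (Fin N), ∀ x ∈ A, ‖∑ i ∈ U, g i x‖ ≤ M * Real.sqrt U.card) :
    ∃ i₀, ∫ x in A, ‖g i₀ x‖ ^ 2 ≤ 6 * M ^ 2 * (volume A).toReal / Real.sqrt N := by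
  haveI : IsFiniteMeasure (volume.restrict A) :=
    ⟨by rwa [Measure.restrict_apply_univ]⟩
  have hNpos : (0:ℝ) < N := by exact_mod_cast hN
  have hsN : (0:ℝ) < Real.sqrt N := Real.sqrt_pos.2 hNpos
  -- single-function pointwise bound
  have hone : ∀ i, ∀ x ∈ A, ‖g i x‖ ≤ M := by
    intro i x hx
    have := hbd {i} x hx
    simpa using this
  -- bound each sub-sum card by N
  have hbdN : ∀ U : Finset (Fin N), ∀ x ∈ A, ‖∑ i ∈ U, g i x‖ ≤ M * Real.sqrt N := by
    intro U x hx
    refine (hbd U x hx).trans ?_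
    have : (U.card : ℝ) ≤ N := by exact_mod_cast U.card_le_univ.trans_eq (by simp)
    exact mul_le_mul_of_nonneg_left (Real.sqrt_le_sqrt this) hM.le
  -- pointwise bound for the sum of norms
  have hptsum : ∀ x ∈ A, ∑ i : Fin N, ‖g i x‖ ≤ 4 * M * Real.sqrt N := by
    intro x hx
    have key : ∀ (f : ℂ → ℝ), (∀ z, |f z| ≤ ‖z‖) → (∀ s : Finset (Fin N),
        f (∑ i ∈ s, g i x) = ∑ i ∈ s, f (g i x)) →
        ∑ i : Fin N, |f (g i x)| ≤ 2 * (M * Real.sqrt N) := by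
      intro f hf hadd
      set P := Finset.univ.filter (fun i => 0 ≤ f (g i x)) with hP
      have h1 : ∑ i ∈ P, |f (g i x)| ≤ M * Real.sqrt N := by
        have : ∑ i ∈ P, |f (g i x)| = f (∑ i ∈ P, g i x) := by
          rw [hadd]
          refine Finset.sum_congr rfl fun i hi => ?_
          exact abs_of_nonneg (Finset.mem_filter.1 hi).2
        rw [this]
        exact le_trans (le_abs_self _) ((hf _).trans (hbdN P x hx))
      have h2 : ∑ i ∈ Pᶜ, |f (g i x)| ≤ M * Real.sqrt N := by
        have : ∑ i ∈ Pᶜ, |f (g i x)| = -f (∑ i ∈ Pᶜ, g i x) := by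
          rw [hadd, ← Finset.sum_neg_distrib]
          refine Finset.sum_congr rfl fun i hi => ?_
          have : ¬ 0 ≤ f (g i x) := by
            simpa [hP] using (Finset.mem_compl.1 hi)
          exact abs_of_neg (lt_of_not_ge this)
        rw [this]
        exact le_trans (neg_le_abs _) ((hf _).trans (hbdN Pᶜ x hx))
      calc ∑ i : Fin N, |f (g i x)| = ∑ i ∈ P, |f (g i x)| + ∑ i ∈ Pᶜ, |f (g i x)| :=
            (Finset.sum_add_sum_compl P _).symm
        _ ≤ M * Real.sqrt N + M * Real.sqrt N := add_le_add h1 h2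
        _ = 2 * (M * Real.sqrt N) := by ring
    have hre := key Complex.re (fun z => by simpa using Complex.abs_re_le_norm z)
      (fun s => by simp [Complex.re_sum])
    have him := key Complex.im (fun z => by simpa using Complex.abs_im_le_norm z)
      (fun s => by simp [Complex.im_sum])
    have hnb : ∀ i : Fin N, ‖g i x‖ ≤ |(g i x).re| + |(g i x).im| :=
      fun i => Complex.norm_le_abs_re_add_abs_im _
    calc ∑ i : Fin N, ‖g i x‖ ≤ ∑ i : Fin N, (|(g i x).re| + |(g i x).im|) :=
          Finset.sum_le_sum fun i _ => hnb i
      _ = ∑ i : Fin N, |(g i x).re| + ∑ i : Fin N, |(g i x).im| := Finset.sum_add_distrib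
      _ ≤ 2 * (M * Real.sqrt N) + 2 * (M * Real.sqrt N) := add_le_add hre him
      _ = 4 * M * Real.sqrt N := by ring
  -- integrability
  have hint1 : ∀ i, Integrable (fun x => ‖g i x‖) (volume.restrict A) := by
    intro i
    exact ((hg i).mono_exponent (by norm_num : (1:ENNReal) ≤ 2)).integrable le_rfl |>.norm
  have hint2 : ∀ i, Integrable (fun x => ‖g i x‖ ^ 2) (volume.restrict A) := by
    intro i
    exact (memLp_two_iff_integrable_sq_norm (hg i).aestronglyMeasurable).1 (hg i)
  -- ∫ ‖g i‖² ≤ M ∫ ‖g i‖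
  have hsq_le : ∀ i, ∫ x in A, ‖g i x‖ ^ 2 ≤ M * ∫ x in A, ‖g i x‖ := by
    intro i
    rw [← integral_const_mul]
    refine setIntegral_mono_on (hint2 i) ((hint1 i).const_mul M) hA ?_
    intro x hx
    have h1 := hone i x hx
    have h0' : (0:ℝ) ≤ ‖g i x‖ := norm_nonneg _
    calc ‖g i x‖ ^ 2 = ‖g i x‖ * ‖g i x‖ := by ring
      _ ≤ M * ‖g i x‖ := mul_le_mul_of_nonneg_right h1 h0'
  -- sum of L¹ norms
  have hsum : ∑ i : Fin N, ∫ x in A, ‖g i x‖ ≤ 4 * M * Real.sqrt N * (volume A).toReal := by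
    rw [← integral_finset_sum _ (fun i _ => hint1 i)]
    have hnorm := norm_setIntegral_le_of_norm_le_const (C := 4 * M * Real.sqrt N)
      (f := fun x => ∑ i : Fin N, ‖g i x‖) hfin ?_
    · exact (Real.le_norm_self _).trans hnorm
    · intro x hx
      have := hptsum x hx
      have hnn : ∀ i : Fin N, (0:ℝ) ≤ ‖g i x‖ := fun i => norm_nonneg _
      calc ‖∑ i : Fin N, ‖g i x‖‖ = ∑ i : Fin N, ‖g i x‖ :=
            Real.norm_of_nonneg (Finset.sum_nonneg fun i _ => hnn i)
        _ ≤ 4 * M * Real.sqrt N := this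
  -- combine: sum of L² integrals
  have hsum2 : ∑ i : Fin N, ∫ x in A, ‖g i x‖ ^ 2 ≤ 4 * M ^ 2 * Real.sqrt N * (volume A).toReal := by
    calc ∑ i : Fin N, ∫ x in A, ‖g i x‖ ^ 2
        ≤ ∑ i : Fin N, M * ∫ x in A, ‖g i x‖ := Finset.sum_le_sum fun i _ => hsq_le i
      _ = M * ∑ i : Fin N, ∫ x in A, ‖g i x‖ := (Finset.mul_sum _ _ _).symm
      _ ≤ M * (4 * M * Real.sqrt N * (volume A).toReal) :=
          mul_le_mul_of_nonneg_left hsum hM.le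
      _ = 4 * M ^ 2 * Real.sqrt N * (volume A).toReal := by ring
  -- pigeonhole
  by_contra hcon
  push_neg at hcon
  have hlt : ∑ i : Fin N, (6 * M ^ 2 * (volume A).toReal / Real.sqrt N) <
      ∑ i : Fin N, ∫ x in A, ‖g i x‖ ^ 2 := by
    refine Finset.sum_lt_sum_of_nonempty ?_ fun i _ => hcon i
    exact Finset.univ_nonempty_iff.2 (Fin.pos_iff_nonempty.1 hN)
  have hconst : ∑ i : Fin N, (6 * M ^ 2 * (volume A).toReal / Real.sqrt N)
      = N * (6 * M ^ 2 * (volume A).toReal / Real.sqrt N) := by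
    simp [Finset.sum_const, mul_comm]
  have hAnn : 0 ≤ (volume A).toReal := ENNReal.toReal_nonneg
  have hkey : 4 * M ^ 2 * Real.sqrt N * (volume A).toReal
      ≤ N * (6 * M ^ 2 * (volume A).toReal / Real.sqrt N) := by
    rw [mul_div_assoc', le_div_iff₀ hsN]
    have hNsq : Real.sqrt N * Real.sqrt N = N := Real.mul_self_sqrt hNpos.le
    have : 4 * M ^ 2 * Real.sqrt N * (volume A).toReal * Real.sqrt N
        = 4 * M ^ 2 * (volume A).toReal * N := by
      rw [show 4 * M ^ 2 * Real.sqrt N * (volume A).toReal * Real.sqrt N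
          = 4 * M ^ 2 * (volume A).toReal * (Real.sqrt N * Real.sqrt N) by ring, hNsq]
    rw [this]
    nlinarith [mul_nonneg (mul_nonneg (sq_nonneg M) hAnn) hNpos.le]
  have := lt_of_le_of_lt (hconst ▸ hkey) hlt
  exact absurd hsum2 (not_le.2 this)
end

section
/- Let $S \subset \mathbb{R}$ be a bounded measurable set of positive measure, let $w \in L^1(S)$ be positive a.e., and suppose there exist, for every $\varepsilon > 0$, a measurable subset $A \subset S$ of positive measure, a real $t$, and a constant $c > 0$ independent of $\varepsilon$, such that $w < \varepsilon$ on $A$, $A + t \subset S$, and $w > c$ on $A + t$. Then no set $\Lambda \subset \mathbb{R}$ has the property that $\{e^{2\pi i \lambda x} : \lambda \in \Lambda\}$ is a Riesz basis for the weighted space $L^2(S, w\,dx)$. -/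
open Filter


open MeasureTheory Real

/-- The exponential `e(λx) = e^{2πiλx}`. -/
noncomputable def expFun (l x : ℝ) : ℂ := Complex.exp (2 * π * Complex.I * l * x)


lemma norm_expFun (l x : ℝ) : ‖expFun l x‖ = 1 := by
  have : (2 * (π:ℂ) * Complex.I * l * x) = ((2 * π * l * x : ℝ) : ℂ) * Complex.I := by
    push_cast; ring
  rw [expFun, this, Complex.norm_exp_ofReal_mul_I]

lemma expFun_mul (l u v : ℝ) : expFun l u * expFun l v = expFun l (u + v) := by
  rw [expFun, expFun, expFun, ← Complex.exp_add]
  congr 1; push_cast; ring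

lemma measurable_expFun (l : ℝ) : Measurable (expFun l) :=
  (Complex.continuous_exp.comp (continuous_const.mul Complex.continuous_ofReal)).measurable

lemma integ_aux {S : Set ℝ} {w : ℝ → ℝ} (hw1 : IntegrableOn w S)
    (φ : ℝ → ℂ) (hφ : Measurable φ) (M : ℝ) (hM : ∀ x, ‖φ x‖ ≤ M) :
    Integrable (fun x => ‖φ x‖ ^ 2 * w x) (volume.restrict S) := by
  apply Integrable.mono' ((hw1.norm).const_mul (M ^ 2))
  · exact ((hφ.norm.pow_const 2).aestronglyMeasurable.mul hw1.aestronglyMeasurable)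
  · refine Filter.Eventually.of_forall fun x => ?_
    have h1 : ‖φ x‖ ^ 2 ≤ M ^ 2 := by
      have := hM x; nlinarith [norm_nonneg (φ x)]
    have h2 : (0:ℝ) ≤ ‖φ x‖ ^ 2 := by positivity
    rw [norm_mul, Real.norm_of_nonneg h2]
    exact mul_le_mul_of_nonneg_right h1 (norm_nonneg _)

/-- `E(Λ)` is a Riesz basis for the weighted space `L²(S, w dx)`: the system is
complete, and satisfies two-sided `ℓ²` bounds for all finite linear combinations. -/
def IsRieszBasisExpW (S : Set ℝ) (w : ℝ → ℝ) (Λ : Set ℝ) : Prop :=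
  (∀ f : ℝ → ℂ, Measurable f →
      Integrable (fun x => ‖f x‖ ^ 2 * w x) (volume.restrict S) →
      ∀ ε > 0, ∃ (F : Finset Λ) (c : Λ → ℂ),
        ∫ x in S, ‖f x - ∑ l ∈ F, c l * expFun l.1 x‖ ^ 2 * w x < ε) ∧
  ∃ K ≥ (1 : ℝ), ∀ (F : Finset Λ) (c : Λ → ℂ),
    (1 / K) * ∑ l ∈ F, ‖c l‖ ^ 2 ≤ ∫ x in S, ‖∑ l ∈ F, c l * expFun l.1 x‖ ^ 2 * w x ∧
    ∫ x in S, ‖∑ l ∈ F, c l * expFun l.1 x‖ ^ 2 * w x ≤ K * ∑ l ∈ F, ‖c l‖ ^ 2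

/-- If the weight `w` oscillates (sets where `w < ε` translate inside `S` to sets where
`w > c`), then no exponential system is a Riesz basis for `L²(S, w dx)`. -/
theorem no_riesz_basis_weighted (S : Set ℝ) (hSm : MeasurableSet S)
    (hSb : Bornology.IsBounded S) (hS : 0 < volume S)
    (w : ℝ → ℝ) (hw1 : IntegrableOn w S) (hwpos : ∀ᵐ x ∂volume.restrict S, 0 < w x)
    (hosc : ∃ c > (0 : ℝ), ∀ ε > (0 : ℝ), ∃ A ⊆ S, MeasurableSet A ∧ 0 < volume A ∧
      ∃ t : ℝ, (∀ x ∈ A, w x < ε) ∧ ∀ x ∈ A, x + t ∈ S ∧ c < w (x + t)) :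
    ¬ ∃ Λ : Set ℝ, IsRieszBasisExpW S w Λ := by
  rintro ⟨Λ, hcomp, K, hK1, hRiesz⟩
  obtain ⟨c, hc, hA⟩ := hosc
  have hK0 : (0:ℝ) < K := lt_of_lt_of_le one_pos hK1
  set ε : ℝ := c / (8 * K ^ 2) with hεdef
  have hε0 : 0 < ε := by positivity
  obtain ⟨A, hAS, hAm, hApos, t, hAw, hAt⟩ := hA ε hε0
  have hSfin : volume S < ⊤ := hSb.measure_lt_top
  have hAfin : volume A < ⊤ := lt_of_le_of_lt (measure_mono hAS) hSfin
  set a : ℝ := (volume A).toReal with hadef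
  have ha0 : 0 < a := ENNReal.toReal_pos hApos.ne' hAfin.ne
  set g : ℝ → ℂ := A.indicator (fun _ => 1) with hgdef
  have hgm : Measurable g := measurable_const.indicator hAm
  have hgb : ∀ x, ‖g x‖ ≤ 1 := by
    intro x; rw [hgdef]
    by_cases hx : x ∈ A <;> simp [Set.indicator_apply, hx]
  have hgint : Integrable (fun x => ‖g x‖ ^ 2 * w x) (volume.restrict S) :=
    integ_aux hw1 g hgm 1 hgb
  have hwS0 : ∀ᵐ x ∂volume.restrict S, 0 ≤ w x := hwpos.mono fun x h => h.le
  -- norm of g bound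
  have hgnorm : ∫ x in S, ‖g x‖ ^ 2 * w x ≤ ε * a := by
    have h1 : (fun x => ‖g x‖ ^ 2 * w x) = A.indicator w := by
      funext x; rw [hgdef]
      by_cases hx : x ∈ A <;> simp [Set.indicator_apply, hx]
    rw [h1, setIntegral_indicator hAm, Set.inter_eq_self_of_subset_right hAS]
    calc ∫ x in A, w x ≤ ∫ _ in A, ε := by
          refine setIntegral_mono_on (hw1.mono_set hAS) ?_ hAm (fun x hx => (hAw x hx).le)
          exact integrableOn_const hAfin.ne
      _ = a * ε := by rw [setIntegral_const, smul_eq_mul]; rfl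
      _ = ε * a := mul_comm _ _
  -- approximation sequence
  set δ : ℕ → ℝ := fun n => min (ε * a) ((1/2 : ℝ) ^ n) with hδdef
  have hδ0 : ∀ n, 0 < δ n := fun n => lt_min (by positivity) (by positivity)
  choose F cc hFcc using fun n : ℕ => hcomp g hgm hgint (δ n) (hδ0 n)
  set P : ℕ → ℝ → ℂ := fun n x => ∑ l ∈ F n, cc n l * expFun l.1 x with hPdef
  have hPm : ∀ n, Measurable (P n) := fun n =>
    Finset.measurable_sum _ fun l _ => (measurable_expFun l.1).const_mul _
  have hPb : ∀ n x, ‖P n x‖ ≤ ∑ l ∈ F n, ‖cc n l‖ := by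
    intro n x
    refine (norm_sum_le _ _).trans (le_of_eq (Finset.sum_congr rfl fun l _ => ?_))
    rw [norm_mul, norm_expFun, mul_one]
  have hPint : ∀ n, Integrable (fun x => ‖P n x‖ ^ 2 * w x) (volume.restrict S) :=
    fun n => integ_aux hw1 (P n) (hPm n) _ (hPb n)
  have hgPm : ∀ n, Measurable (fun x => g x - P n x) := fun n => hgm.sub (hPm n)
  have hgPb : ∀ n x, ‖g x - P n x‖ ≤ 1 + ∑ l ∈ F n, ‖cc n l‖ := fun n x =>
    (norm_sub_le _ _).trans (add_le_add (hgb x) (hPb n x))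
  have hgPint : ∀ n, Integrable (fun x => ‖g x - P n x‖ ^ 2 * w x) (volume.restrict S) :=
    fun n => integ_aux hw1 _ (hgPm n) _ (hgPb n)
  have hgPsmall : ∀ n, ∫ x in S, ‖g x - P n x‖ ^ 2 * w x < δ n := hFcc
  -- bound on ∫ ‖P n‖² w
  have hPbound : ∀ n, ∫ x in S, ‖P n x‖ ^ 2 * w x ≤ 4 * (ε * a) := by
    intro n
    have hle : ∫ x in S, ‖P n x‖ ^ 2 * w x ≤
        ∫ x in S, (2 * (‖g x‖ ^ 2 * w x) + 2 * (‖g x - P n x‖ ^ 2 * w x)) := by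
      refine integral_mono_ae (hPint n) (((hgint.const_mul 2)).add ((hgPint n).const_mul 2)) ?_
      refine hwS0.mono fun x hx => ?_
      show ‖P n x‖ ^ 2 * w x ≤ 2 * (‖g x‖ ^ 2 * w x) + 2 * (‖g x - P n x‖ ^ 2 * w x)
      have h1 : ‖P n x‖ ≤ ‖g x‖ + ‖g x - P n x‖ := by
        have h := norm_sub_le (g x) (g x - P n x)
        rwa [sub_sub_cancel] at h
      have h2 : ‖P n x‖ ^ 2 ≤ 2 * ‖g x‖ ^ 2 + 2 * ‖g x - P n x‖ ^ 2 := by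
        nlinarith [norm_nonneg (P n x), norm_nonneg (g x), norm_nonneg (g x - P n x),
          sq_nonneg (‖g x‖ - ‖g x - P n x‖)]
      have h3 := mul_le_mul_of_nonneg_right h2 hx
      nlinarith [h3]
    rw [integral_add (hgint.const_mul 2) ((hgPint n).const_mul 2),
      integral_const_mul, integral_const_mul] at hle
    have h2 := (hgPsmall n).le.trans (min_le_left _ _)
    nlinarith [hgnorm]
  -- coefficient bound
  have hsum : ∀ n, ∑ l ∈ F n, ‖cc n l‖ ^ 2 ≤ 4 * K * (ε * a) := by
    intro n
    have h1 := (hRiesz (F n) (cc n)).1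
    have h2 := hPbound n
    have h3 : (1 / K) * ∑ l ∈ F n, ‖cc n l‖ ^ 2 ≤ 4 * (ε * a) := le_trans h1 h2
    rw [div_mul_eq_mul_div, one_mul, div_le_iff₀ hK0] at h3
    linarith [h3]
  -- translated system
  set d : ℕ → Λ → ℂ := fun n l => cc n l * expFun l.1 (-t) with hddef
  set Q : ℕ → ℝ → ℂ := fun n x => ∑ l ∈ F n, d n l * expFun l.1 x with hQdef
  have hQP : ∀ n x, Q n x = P n (x - t) := by
    intro n x
    refine Finset.sum_congr rfl fun l _ => ?_
    rw [mul_assoc, expFun_mul]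
    congr 2
    ring
  have hdc : ∀ n l, ‖d n l‖ = ‖cc n l‖ := by
    intro n l; rw [hddef]; simp only []
    rw [norm_mul, norm_expFun, mul_one]
  have hQm : ∀ n, Measurable (Q n) := fun n =>
    Finset.measurable_sum _ fun l _ => (measurable_expFun l.1).const_mul _
  have hQb : ∀ n x, ‖Q n x‖ ≤ ∑ l ∈ F n, ‖cc n l‖ := by
    intro n x
    refine (norm_sum_le _ _).trans (le_of_eq (Finset.sum_congr rfl fun l _ => ?_))
    rw [norm_mul, norm_expFun, mul_one, hdc]
  have hQint : ∀ n, Integrable (fun x => ‖Q n x‖ ^ 2 * w x) (volume.restrict S) :=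
    fun n => integ_aux hw1 (Q n) (hQm n) _ (hQb n)
  have hQbound : ∀ n, ∫ x in S, ‖Q n x‖ ^ 2 * w x ≤ 4 * K ^ 2 * (ε * a) := by
    intro n
    have h1 := (hRiesz (F n) (d n)).2
    have h2 : ∑ l ∈ F n, ‖d n l‖ ^ 2 = ∑ l ∈ F n, ‖cc n l‖ ^ 2 :=
      Finset.sum_congr rfl fun l _ => by rw [hdc]
    rw [h2] at h1
    have h3 := hsum n
    calc ∫ x in S, ‖Q n x‖ ^ 2 * w x ≤ K * ∑ l ∈ F n, ‖cc n l‖ ^ 2 := h1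
      _ ≤ K * (4 * K * (ε * a)) := mul_le_mul_of_nonneg_left h3 hK0.le
      _ = 4 * K ^ 2 * (ε * a) := by ring
  -- a.e. convergence of P n to g on S
  have hwaem : AEMeasurable w (volume.restrict S) := hw1.aestronglyMeasurable.aemeasurable
  set u : ℕ → ℝ → ENNReal := fun n x => ENNReal.ofReal (‖g x - P n x‖ ^ 2 * w x) with hudef
  have hum : ∀ n, AEMeasurable (u n) (volume.restrict S) := by
    intro n
    exact ENNReal.measurable_ofReal.comp_aemeasurable
      ((((hgPm n).norm.pow_const 2).aemeasurable).mul hwaem)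
  have hunn : ∀ n, (0 : ℝ → ℝ) ≤ᵐ[volume.restrict S] fun x => ‖g x - P n x‖ ^ 2 * w x :=
    fun n => hwS0.mono fun x hx => by
      have : (0:ℝ) ≤ ‖g x - P n x‖ ^ 2 * w x := mul_nonneg (by positivity) hx
      simpa using this
  have hui : ∀ n, ∫⁻ x in S, u n x ≤ ENNReal.ofReal ((1/2 : ℝ) ^ n) := by
    intro n
    rw [hudef]
    rw [← ofReal_integral_eq_lintegral_ofReal (hgPint n) (hunn n)]
    exact ENNReal.ofReal_le_ofReal ((hgPsmall n).le.trans (min_le_right _ _))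
  have htsum_ne : ∑' n, ∫⁻ x in S, u n x ≠ ⊤ := by
    have h1 : ∑' n, ∫⁻ x in S, u n x ≤ ∑' n : ℕ, (ENNReal.ofReal (1/2)) ^ n := by
      refine ENNReal.tsum_le_tsum fun n => (hui n).trans_eq ?_
      rw [← ENNReal.ofReal_pow (by norm_num)]
    refine ne_top_of_le_ne_top ?_ h1
    rw [ENNReal.tsum_geometric]
    refine ENNReal.inv_ne_top.2 fun h => ?_
    have h2 : (1:ENNReal) ≤ ENNReal.ofReal (1/2) := tsub_eq_zero_iff_le.mp h
    have h3 : ENNReal.ofReal (1/2) < 1 := ENNReal.ofReal_lt_one.2 (by norm_num)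
    exact absurd h2 (not_le.2 h3)
  have hconv : ∀ᵐ x ∂volume.restrict S, Filter.Tendsto (fun n => P n x) atTop (nhds (g x)) := by
    have h1 : ∫⁻ x in S, (∑' n, u n x) = ∑' n, ∫⁻ x in S, u n x := lintegral_tsum hum
    have h2 : ∀ᵐ x ∂volume.restrict S, (∑' n, u n x) < ⊤ :=
      ae_lt_top' (AEMeasurable.ennreal_tsum hum) (by rw [h1]; exact htsum_ne)
    refine (h2.and hwpos).mono fun x ⟨hx, hwx⟩ => ?_
    have h3 : Filter.Tendsto (fun n => u n x) atTop (nhds 0) :=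
      ENNReal.tendsto_atTop_zero_of_tsum_ne_top hx.ne
    have h4 : Filter.Tendsto (fun n => ‖g x - P n x‖ ^ 2 * w x) atTop (nhds 0) := by
      have h5 : Filter.Tendsto (fun n => (u n x).toReal) atTop (nhds ((0:ENNReal).toReal)) :=
        (ENNReal.tendsto_toReal (by simp)).comp h3
      rw [ENNReal.toReal_zero] at h5
      refine h5.congr fun n => ?_
      rw [hudef]
      exact ENNReal.toReal_ofReal (mul_nonneg (by positivity) hwx.le)
    have h6 : Filter.Tendsto (fun n => ‖g x - P n x‖ ^ 2) atTop (nhds 0) := by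
      have := h4.mul_const (w x)⁻¹
      rw [zero_mul] at this
      refine this.congr fun n => ?_
      field_simp
    have h7 : Filter.Tendsto (fun n => ‖g x - P n x‖) atTop (nhds 0) := by
      have h8 : Filter.Tendsto (fun n => Real.sqrt (‖g x - P n x‖ ^ 2)) atTop (nhds (Real.sqrt 0)) :=
        (Real.continuous_sqrt.tendsto 0).comp h6
      rw [Real.sqrt_zero] at h8
      refine h8.congr fun n => Real.sqrt_sq (norm_nonneg _)
    rw [tendsto_iff_norm_sub_tendsto_zero]
    refine h7.congr fun n => ?_
    rw [norm_sub_rev]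
  -- the translated set B = A + t
  set B : Set ℝ := (fun y => y + (-t)) ⁻¹' A with hBdef
  have hBm : MeasurableSet B := hAm.preimage (measurable_add_const (-t))
  have hBvol : volume B = volume A := measure_preimage_add_right volume (-t) A
  have hmemB : ∀ y, y ∈ B ↔ y + (-t) ∈ A := fun y => Iff.rfl
  have hBS : B ⊆ S := by
    intro y hy
    have h1 := (hAt _ ((hmemB y).1 hy)).1
    rwa [neg_add_cancel_right] at h1
  have hBw : ∀ y ∈ B, c < w y := by
    intro y hy
    have h1 := (hAt _ ((hmemB y).1 hy)).2
    rwa [neg_add_cancel_right] at h1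
  -- a.e. convergence of Q n to 1 on B
  have hQconv : ∀ᵐ y ∂volume.restrict B, Filter.Tendsto (fun n => Q n y) atTop (nhds 1) := by
    set N : Set ℝ := {x | ¬ Filter.Tendsto (fun n => P n x) atTop (nhds (g x))} with hNdef
    have hN : volume (N ∩ S) = 0 := by
      have h1 := hconv
      rw [ae_iff, Measure.restrict_apply' hSm] at h1
      exact h1
    rw [ae_iff, Measure.restrict_apply' hBm]
    have h0 : volume ((fun y => y + (-t)) ⁻¹' (N ∩ S)) = 0 := by
      rw [measure_preimage_add_right]; exact hN
    refine measure_mono_null ?_ h0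
    rintro y ⟨hy1, hy2⟩
    · constructor
      · simp only [hNdef, Set.mem_setOf_eq]
        intro hcontra
        apply hy1
        have hgval : g (y + (-t)) = 1 := by
          rw [hgdef, Set.indicator_of_mem ((hmemB y).1 hy2)]
        rw [hgval] at hcontra
        refine hcontra.congr fun n => ?_
        rw [hQP n y, sub_eq_add_neg]
      · exact hAS ((hmemB y).1 hy2)
  -- Fatou argument
  have hQBaem : ∀ n, AEMeasurable (fun y => ENNReal.ofReal (‖Q n y‖ ^ 2 * w y))
      (volume.restrict B) := by
    intro n
    have h1 : AEMeasurable w (volume.restrict B) :=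
      hwaem.mono_measure (Measure.restrict_mono hBS le_rfl)
    exact ENNReal.measurable_ofReal.comp_aemeasurable
      ((((hQm n).norm.pow_const 2).aemeasurable).mul h1)
  have key : ENNReal.ofReal c * volume B ≤ ENNReal.ofReal (4 * K ^ 2 * (ε * a)) := by
    calc ENNReal.ofReal c * volume B = ∫⁻ _ in B, ENNReal.ofReal c := (setLIntegral_const B _).symm
      _ ≤ ∫⁻ y in B, ENNReal.ofReal (w y) := by
          refine lintegral_mono_ae ?_
          exact (ae_restrict_iff' hBm).2 (Filter.Eventually.of_forall fun y hy =>
            ENNReal.ofReal_le_ofReal (hBw y hy).le)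
      _ ≤ ∫⁻ y in B, Filter.liminf (fun n => ENNReal.ofReal (‖Q n y‖ ^ 2 * w y)) atTop := by
          refine lintegral_mono_ae (hQconv.mono fun y hy => ?_)
          have h1 : Filter.Tendsto (fun n => ‖Q n y‖ ^ 2 * w y) atTop (nhds (‖(1:ℂ)‖ ^ 2 * w y)) :=
            ((hy.norm.pow 2).mul_const (w y))
          rw [norm_one, one_pow, one_mul] at h1
          have h2 : Filter.Tendsto (fun n => ENNReal.ofReal (‖Q n y‖ ^ 2 * w y)) atTop
              (nhds (ENNReal.ofReal (w y))) :=
            (ENNReal.continuous_ofReal.tendsto _).comp h1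
          rw [h2.liminf_eq]
      _ ≤ Filter.liminf (fun n => ∫⁻ y in B, ENNReal.ofReal (‖Q n y‖ ^ 2 * w y)) atTop :=
          lintegral_liminf_le' hQBaem
      _ ≤ ENNReal.ofReal (4 * K ^ 2 * (ε * a)) := by
          have hlc : Filter.liminf (fun _ : ℕ => ENNReal.ofReal (4 * K ^ 2 * (ε * a))) atTop
              = ENNReal.ofReal (4 * K ^ 2 * (ε * a)) := Filter.liminf_const _
          refine le_trans (Filter.liminf_le_liminf (Filter.Eventually.of_forall fun n => ?_)) hlc.le
          calc ∫⁻ y in B, ENNReal.ofReal (‖Q n y‖ ^ 2 * w y)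
              ≤ ∫⁻ y in S, ENNReal.ofReal (‖Q n y‖ ^ 2 * w y) :=
                lintegral_mono' (Measure.restrict_mono hBS le_rfl) (le_refl _)
            _ = ENNReal.ofReal (∫ x in S, ‖Q n x‖ ^ 2 * w x) := by
                rw [← ofReal_integral_eq_lintegral_ofReal (hQint n)
                  (hwS0.mono fun x hx => by
                    have : (0:ℝ) ≤ ‖Q n x‖ ^ 2 * w x := mul_nonneg (by positivity) hx
                    simpa using this)]
            _ ≤ ENNReal.ofReal (4 * K ^ 2 * (ε * a)) := ENNReal.ofReal_le_ofReal (hQbound n)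
  -- derive a contradiction
  rw [hBvol, ← ENNReal.ofReal_toReal hAfin.ne, ← hadef,
    ← ENNReal.ofReal_mul hc.le] at key
  have hfin : c * a ≤ 4 * K ^ 2 * (ε * a) := by
    have h1 : (0:ℝ) ≤ 4 * K ^ 2 * (ε * a) := by positivity
    exact (ENNReal.ofReal_le_ofReal_iff h1).1 key
  rw [hεdef] at hfin
  have hK2 : (0:ℝ) < K ^ 2 := by positivity
  have : 4 * K ^ 2 * (c / (8 * K ^ 2) * a) = c * a / 2 := by field_simp; ring
  rw [this] at hfin
  nlinarith
end
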